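/- Let n ≥ 2, let Ω ⊆ ℝⁿ be open, and let a : [0,∞) → ℝ be continuously differentiable on [0,∞) with a(t) > 0 for t > 0. Assume there is a constant i_a > −1 such that t·a'(t) ≥ i_a·a(t) for all t > 0. Then there exists a constant C > 0, depending only on n and i_a, such that for every function u ∈ C³(Ω) and every point x ∈ Ω with ∇u(x) ≠ 0, the pointwise inequality (div(a(|∇u|)∇u))² ≥ Σ_{j=1}^n ∂_{x_j}( a(|∇u|)² u_{x_j} Δu ) − Σ_{i=1}^n ∂_{x_i}( a(|∇u|)² Σ_{j=1}^n u_{x_j} u_{x_i x_j} ) + C · a(|∇u|)² |∇²u|² holds at x. -/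

import Mathlib

noncomputable section

open Finset

/-- The `i`-th standard basis vector of `ℝⁿ`. -/
def stdBasis (n : ℕ) (i : Fin n) : EuclideanSpace ℝ (Fin n) :=
  EuclideanSpace.single i 1

/-- The `i`-th partial derivative of `f` at `x`. -/
def pd {n : ℕ} (f : EuclideanSpace ℝ (Fin n) → ℝ) (i : Fin n)
    (x : EuclideanSpace ℝ (Fin n)) : ℝ :=
  fderiv ℝ f x (stdBasis n i)

/-- The Euclidean norm of the gradient of `u` at `x`. -/
def gradNorm {n : ℕ} (u : EuclideanSpace ℝ (Fin n) → ℝ)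
    (x : EuclideanSpace ℝ (Fin n)) : ℝ :=
  Real.sqrt (∑ j, (pd u j x) ^ 2)

/-- The `(i,j)` entry `u_{x_i x_j}` of the Hessian of `u` at `x`. -/
def hess {n : ℕ} (u : EuclideanSpace ℝ (Fin n) → ℝ) (i j : Fin n)
    (x : EuclideanSpace ℝ (Fin n)) : ℝ :=
  pd (pd u j) i x

/-- The Laplacian of `u` at `x`. -/
def lap {n : ℕ} (u : EuclideanSpace ℝ (Fin n) → ℝ)
    (x : EuclideanSpace ℝ (Fin n)) : ℝ :=
  ∑ i, hess u i i x

section Helpers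

variable {n : ℕ} {f g : EuclideanSpace ℝ (Fin n) → ℝ} {x : EuclideanSpace ℝ (Fin n)}

lemma pd_hasFDerivAt {L : EuclideanSpace ℝ (Fin n) →L[ℝ] ℝ} (h : HasFDerivAt f L x) (j : Fin n) :
    pd f j x = L (stdBasis n j) := by rw [pd, h.fderiv]

lemma contDiffAt_pd {m : WithTop ℕ∞} (hf : ContDiffAt ℝ (m + 1) f x) (j : Fin n) :
    ContDiffAt ℝ m (pd f j) x :=
  (hf.fderiv_right le_rfl).clm_apply contDiffAt_const

lemma pd_congr (h : f =ᶠ[nhds x] g) (j : Fin n) : pd f j x = pd g j x := by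
  rw [pd, pd, h.fderiv_eq]

lemma pd_mul (hf : DifferentiableAt ℝ f x) (hg : DifferentiableAt ℝ g x) (j : Fin n) :
    pd (fun y => f y * g y) j x = f x * pd g j x + g x * pd f j x := by
  rw [pd, fderiv_fun_mul hf hg]; simp [pd]

lemma pd_sum {ι : Type*} (s : Finset ι) (F : ι → EuclideanSpace ℝ (Fin n) → ℝ)
    (hF : ∀ i ∈ s, DifferentiableAt ℝ (F i) x) (j : Fin n) :
    pd (fun y => ∑ i ∈ s, F i y) j x = ∑ i ∈ s, pd (F i) j x := by
  rw [pd, fderiv_fun_sum hF]; simp [pd]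

lemma pd_comp (a : ℝ → ℝ) (ha : DifferentiableAt ℝ a (f x)) (hf : DifferentiableAt ℝ f x)
    (j : Fin n) :
    pd (fun y => a (f y)) j x = deriv a (f x) * pd f j x := by
  have := (ha.hasDerivAt).comp_hasFDerivAt x hf.hasFDerivAt
  rw [show (fun y => a (f y)) = a ∘ f from rfl, pd_hasFDerivAt this]
  simp [pd, smul_eq_mul]

lemma pd_sqrt (hf : DifferentiableAt ℝ f x) (h0 : f x ≠ 0) (j : Fin n) :
    pd (fun y => Real.sqrt (f y)) j x = pd f j x / (2 * Real.sqrt (f x)) := by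
  have := (Real.hasDerivAt_sqrt h0).comp_hasFDerivAt x hf.hasFDerivAt
  rw [show (fun y => Real.sqrt (f y)) = Real.sqrt ∘ f from rfl, pd_hasFDerivAt this]
  simp [pd, smul_eq_mul]; ring

lemma pd_pd_eq (hf : ContDiffAt ℝ 2 f x) (i j : Fin n) :
    pd (pd f j) i x = fderiv ℝ (fderiv ℝ f) x (stdBasis n i) (stdBasis n j) := by
  have hd : DifferentiableAt ℝ (fderiv ℝ f) x :=
    (hf.fderiv_right (m := 1) le_rfl).differentiableAt one_ne_zero
  have h := hd.hasFDerivAt.clm_apply (hasFDerivAt_const (stdBasis n j) x)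
  rw [pd, show pd f j = fun y => (fderiv ℝ f y) (stdBasis n j) from rfl, h.fderiv]
  simp

lemma pd_symm (hf : ContDiffAt ℝ 2 f x) (i j : Fin n) :
    pd (pd f j) i x = pd (pd f i) j x := by
  rw [pd_pd_eq hf, pd_pd_eq hf, hf.isSymmSndFDerivAt (by simp [minSmoothness_of_isRCLikeNormedField]) (stdBasis n i) (stdBasis n j)]

lemma matrix_ineq {m : ℕ} (p w : Fin m → ℝ) (H : Fin m → Fin m → ℝ)
    (hsym : ∀ i j, H i j = H j i) (hw : ∀ i, w i = ∑ k, p k * H i k)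
    (hs2 : 0 < ∑ i, (p i)^2) :
    2 * (∑ i, (p i)^2) * (∑ i, (w i)^2) - (∑ i, p i * w i)^2
      ≤ (∑ i, (p i)^2)^2 * (∑ i, ∑ j, (H i j)^2) := by
  set s2 := ∑ i, (p i)^2 with hs2def
  set q := ∑ i, p i * w i with hqdef
  set b := ∑ i, (w i)^2 with hbdef
  set h := ∑ i, ∑ j, (H i j)^2 with hhdef
  have hw1 : ∀ i, ∑ j, H i j * p j = w i := by
    intro i; rw [hw]; exact Finset.sum_congr rfl fun k _ => (mul_comm _ _)
  have hw2 : ∀ j, ∑ i, p i * H i j = w j := by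
    intro j; rw [hw]; exact Finset.sum_congr rfl fun k _ => by rw [hsym]
  have hPW : ∑ i, p i * (∑ j, H i j * w j) = b := by
    calc ∑ i, p i * (∑ j, H i j * w j) = ∑ i, ∑ j, p i * H i j * w j := by
          simp only [Finset.mul_sum, mul_assoc]
      _ = ∑ j, ∑ i, p i * H i j * w j := Finset.sum_comm
      _ = ∑ j, (∑ i, p i * H i j) * w j := by
          exact Finset.sum_congr rfl fun j _ => (Finset.sum_mul _ _ _).symm
      _ = ∑ j, w j * w j := by exact Finset.sum_congr rfl fun j _ => by rw [hw2]
      _ = b := by rw [hbdef]; exact Finset.sum_congr rfl fun j _ => (sq (w j)).symm ▸ by ring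
  have inner : ∀ i, ∑ j, (s2^2*H i j - s2*p i*w j - s2*w i*p j + q*(p i*p j))^2
      = s2^4*(∑ j, (H i j)^2) - 2*s2^3*p i*(∑ j, H i j*w j) - 2*s2^3*w i*(∑ j, H i j*p j)
        + 2*s2^2*q*p i*(∑ j, H i j*p j) + s2^2*(p i)^2*(∑ j, (w j)^2)
        + s2^2*(w i)^2*(∑ j, (p j)^2)
        + 2*s2^2*(p i*w i)*(∑ j, p j*w j) - 2*s2*q*(p i)^2*(∑ j, p j*w j)
        - 2*s2*q*(p i*w i)*(∑ j, (p j)^2) + q^2*(p i)^2*(∑ j, (p j)^2) := by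
    intro i
    simp only [Finset.mul_sum, ← Finset.sum_add_distrib, ← Finset.sum_sub_distrib]
    exact Finset.sum_congr rfl fun j _ => by ring
  have houter : ∑ i, ∑ j, (s2^2*H i j - s2*p i*w j - s2*w i*p j + q*(p i*p j))^2
      = s2^4*h - 2*s2^3*b - 2*s2^3*b + 2*s2^2*q*q + s2^2*s2*b + s2^2*b*s2
        + 2*s2^2*q*q - 2*s2*q*s2*q - 2*s2*q*q*s2 + q^2*s2*s2 := by
    rw [Finset.sum_congr rfl fun i _ => inner i]
    simp only [Finset.sum_add_distrib, Finset.sum_sub_distrib, hw1, ← hs2def, ← hqdef,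
      ← hbdef]
    simp only [← Finset.sum_mul, ← Finset.mul_sum]
    have e1 : ∑ x, 2*s2^3*p x*(∑ j, H x j*w j) = 2*s2^3 * b := by
      rw [← hPW, Finset.mul_sum]; exact Finset.sum_congr rfl fun x _ => by ring
    have e2 : ∑ x, 2*s2^3*w x*w x = 2*s2^3*b := by
      rw [hbdef, Finset.mul_sum]; exact Finset.sum_congr rfl fun x _ => by ring
    have e3 : ∑ x, 2*s2^2*q*p x*w x = 2*s2^2*q*q := by
      calc ∑ x, 2*s2^2*q*p x*w x = ∑ x, 2*s2^2*q*(p x * w x) :=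
            Finset.sum_congr rfl fun x _ => by ring
        _ = (2*s2^2*q) * ∑ x, p x * w x := (Finset.mul_sum _ _ _).symm
        _ = 2*s2^2*q*q := by rw [← hqdef]
    rw [e1, e2, e3, ← hhdef, ← hs2def, ← hbdef, ← hqdef]
  have hEnn : 0 ≤ ∑ i, ∑ j, (s2^2*H i j - s2*p i*w j - s2*w i*p j + q*(p i*p j))^2 :=
    Finset.sum_nonneg fun i _ => Finset.sum_nonneg fun j _ => sq_nonneg _
  rw [houter] at hEnn
  nlinarith [mul_pos hs2 hs2, sq_nonneg s2]

lemma scalar_ineq (i_a κ t b h : ℝ) (hia : -1 < i_a) (hκ : i_a ≤ κ)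
    (hbt : t^2 ≤ b) (hh : 2*b - t^2 ≤ h) (hh0 : 0 ≤ h) :
    min 1 ((1+i_a)^2) * h ≤ κ^2*t^2 + 2*κ*b + h := by
  rcases le_or_gt 0 κ with h1 | h2
  · have h3 : min 1 ((1+i_a)^2) ≤ 1 := min_le_left _ _
    have hb0 : 0 ≤ b := le_trans (sq_nonneg t) hbt
    nlinarith [sq_nonneg κ, sq_nonneg t, mul_nonneg h1 hb0]
  · have h1κ : 0 < 1 + κ := by linarith
    have h3 : min 1 ((1+i_a)^2) ≤ (1+i_a)^2 := min_le_right _ _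
    have h4 : (1+i_a)^2 ≤ (1+κ)^2 := by nlinarith
    have h5 : 0 ≤ (-κ) * (1+κ) * (b - t^2) := by
      apply mul_nonneg (mul_nonneg (by linarith) (by linarith)); linarith
    have h6 : 0 ≤ (-κ) * (κ+2) * (h - (2*b - t^2)) := by
      apply mul_nonneg (mul_nonneg (by linarith) (by linarith)); linarith
    nlinarith [mul_le_mul_of_nonneg_right h4 hh0, mul_le_mul_of_nonneg_right h3 hh0]

lemma key_scalar (i_a A A' s q b h C : ℝ) (hia : -1 < i_a) (hA : 0 < A) (hs : 0 < s)
    (hκ : i_a * A ≤ s * A') (hcs : q^2 ≤ s^2 * b) (hmat : 2*(s^2)*b - q^2 ≤ (s^2)^2*h)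
    (hh : 0 ≤ h) (hC : C = min 1 ((1+i_a)^2)) :
    C * A^2 * h ≤ A'^2*q^2/s^2 + 2*A*A'*b/s + A^2*h := by
  set κ := s * A' / A with hκdef
  set t := q / s^2 with htdef
  set bn := b / s^2 with hbndef
  have hκ1 : i_a ≤ κ := by
    rw [hκdef, le_div_iff₀ hA]; linarith
  have hbt : t^2 ≤ bn := by
    rw [htdef, hbndef, div_pow, div_le_div_iff₀ (by positivity) (by positivity)]
    calc q^2 * s^2 ≤ (s^2*b) * s^2 := by nlinarith [sq_nonneg s]
      _ = b * (s^2)^2 := by ring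
  have hhn : 2*bn - t^2 ≤ h := by
    rw [hbndef, htdef, div_pow]
    have e : 2*(b/s^2) - q^2/(s^2)^2 = (2*s^2*b - q^2)/(s^2)^2 := by
      field_simp
    rw [e, div_le_iff₀ (by positivity)]
    calc 2*s^2*b - q^2 ≤ (s^2)^2*h := hmat
      _ = h * (s^2)^2 := by ring
  have key := scalar_ineq i_a κ t bn h hia hκ1 hbt hhn hh
  rw [← hC] at key
  have key2 := mul_le_mul_of_nonneg_left key (le_of_lt (mul_pos hA hA))
  calc C * A^2 * h = (A*A) * (C * h) := by ring
    _ ≤ (A*A) * (κ^2*t^2 + 2*κ*bn + h) := key2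
    _ = A'^2*q^2/s^2 + 2*A*A'*b/s + A^2*h := by
        rw [hκdef, htdef, hbndef]
        field_simp

end Helpers

/-- The pointwise differential inequality
`(div(a(|∇u|)∇u))² ≥ ∑ⱼ ∂ⱼ(a(|∇u|)² u_{xⱼ} Δu) − ∑ᵢ ∂ᵢ(a(|∇u|)² ∑ⱼ u_{xⱼ} u_{xᵢxⱼ})
  + C a(|∇u|)² |∇²u|²`
with a constant `C > 0` depending only on `n` and `i_a`. -/
theorem pointwise_differential_inequality
    (n : ℕ) (hn : 2 ≤ n) (i_a : ℝ) (hia : -1 < i_a) :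
    ∃ C : ℝ, 0 < C ∧
      ∀ a : ℝ → ℝ, ContDiffOn ℝ 1 a (Set.Ici 0) → (∀ t : ℝ, 0 < t → 0 < a t) →
        (∀ t : ℝ, 0 < t → i_a * a t ≤ t * deriv a t) →
      ∀ Ω : Set (EuclideanSpace ℝ (Fin n)), IsOpen Ω →
      ∀ u : EuclideanSpace ℝ (Fin n) → ℝ, ContDiffOn ℝ 3 u Ω →
      ∀ x ∈ Ω, (fun j => pd u j x) ≠ 0 →
        (∑ j, pd (fun y => a (gradNorm u y) * pd u j y) j x) ^ 2 ≥
          (∑ j, pd (fun y => (a (gradNorm u y)) ^ 2 * pd u j y * lap u y) j x)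
          - (∑ i, pd (fun y => (a (gradNorm u y)) ^ 2 * ∑ j, pd u j y * hess u i j y) i x)
          + C * (a (gradNorm u x)) ^ 2 * ∑ i, ∑ j, (hess u i j x) ^ 2 := by
  refine ⟨min 1 ((1+i_a)^2), lt_min one_pos (pow_pos (by linarith) 2), ?_⟩
  intro a ha1 ha2 ha3 Ω hΩ u hu x hx hpx
  -- basic smoothness facts
  have hUy : ∀ y ∈ Ω, ContDiffAt ℝ 3 u y := fun y hy => hu.contDiffAt (hΩ.mem_nhds hy)
  have hpd2 : ∀ (j : Fin n), ∀ y ∈ Ω, ContDiffAt ℝ 2 (pd u j) y := by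
    intro j y hy
    exact contDiffAt_pd (m := 2) ((hUy y hy).of_le (by norm_num)) j
  have hhess1 : ∀ (i j : Fin n), ∀ y ∈ Ω, ContDiffAt ℝ 1 (hess u i j) y := by
    intro i j y hy
    exact contDiffAt_pd (m := 1) ((hpd2 j y hy).of_le (by norm_num)) i
  have dpd : ∀ j : Fin n, DifferentiableAt ℝ (pd u j) x :=
    fun j => (hpd2 j x hx).differentiableAt (by norm_num)
  have dhess : ∀ i j : Fin n, DifferentiableAt ℝ (hess u i j) x :=
    fun i j => (hhess1 i j x hx).differentiableAt one_ne_zero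
  have dlap : DifferentiableAt ℝ (lap u) x := by
    have : DifferentiableAt ℝ (fun y => ∑ i, hess u i i y) x :=
      DifferentiableAt.fun_sum fun i _ => dhess i i
    exact this
  -- the squared gradient
  have hS2 : DifferentiableAt ℝ (fun y => ∑ j, (pd u j y)^2) x :=
    DifferentiableAt.fun_sum fun j _ => (dpd j).pow 2
  obtain ⟨j0, hj0⟩ : ∃ j, pd u j x ≠ 0 := Function.ne_iff.mp hpx
  have hS0 : 0 < ∑ j, (pd u j x)^2 :=
    Finset.sum_pos' (fun i _ => sq_nonneg _) ⟨j0, Finset.mem_univ _, pow_two_pos_of_ne_zero hj0⟩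
  have hs : 0 < gradNorm u x := Real.sqrt_pos.2 hS0
  have hss : (gradNorm u x)^2 = ∑ j, (pd u j x)^2 := Real.sq_sqrt hS0.le
  have dgrad : DifferentiableAt ℝ (gradNorm u) x := by
    have := (Real.hasDerivAt_sqrt hS0.ne').comp_hasFDerivAt x hS2.hasFDerivAt
    exact this.differentiableAt
  have haDiff : DifferentiableAt ℝ a (gradNorm u x) :=
    (ha1.contDiffAt (Ici_mem_nhds hs)).differentiableAt one_ne_zero
  have dag : DifferentiableAt ℝ (fun y => a (gradNorm u y)) x :=
    DifferentiableAt.comp x haDiff dgrad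
  have dag2 : DifferentiableAt ℝ (fun y => (a (gradNorm u y))^2) x := dag.pow 2
  -- first derivative computations at x
  have hpdS : ∀ i : Fin n, pd (fun y => ∑ j, (pd u j y)^2) i x
      = ∑ k, 2 * (pd u k x * hess u i k x) := by
    intro i
    have h := pd_sum Finset.univ (fun k => fun y => (pd u k y)^2)
      (fun k _ => (dpd k).pow 2) i
    beta_reduce at h
    rw [h]
    refine Finset.sum_congr rfl fun k _ => ?_
    have fe : (fun y => (pd u k y)^2) = fun y => pd u k y * pd u k y := by
      funext y; ring
    rw [fe, pd_mul (dpd k) (dpd k) i]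
    have he : pd (pd u k) i x = hess u i k x := rfl
    rw [he]; ring
  have hgrad : ∀ i : Fin n, pd (gradNorm u) i x
      = (∑ k, pd u k x * hess u i k x) / gradNorm u x := by
    intro i
    have h1 := pd_sqrt (f := fun y => ∑ j, (pd u j y)^2) hS2 hS0.ne' i
    beta_reduce at h1
    rw [hpdS i] at h1
    have h2 : pd (gradNorm u) i x
        = (∑ k, 2 * (pd u k x * hess u i k x)) / (2 * gradNorm u x) := h1
    rw [h2, ← Finset.mul_sum, mul_div_mul_left _ _ (two_ne_zero)]
  have haG : ∀ i : Fin n, pd (fun y => a (gradNorm u y)) i x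
      = deriv a (gradNorm u x) * ((∑ k, pd u k x * hess u i k x) / gradNorm u x) := by
    intro i
    have h := pd_comp a haDiff dgrad i
    rw [h, hgrad i]
  have hag2 : ∀ i : Fin n, pd (fun y => (a (gradNorm u y))^2) i x
      = 2 * a (gradNorm u x) * deriv a (gradNorm u x)
        * ((∑ k, pd u k x * hess u i k x) / gradNorm u x) := by
    intro i
    have fe : (fun y => (a (gradNorm u y))^2)
        = fun y => a (gradNorm u y) * a (gradNorm u y) := by funext y; ring
    rw [fe, pd_mul dag dag i, haG i]; ring
  have hdiv : ∀ j : Fin n, pd (fun y => a (gradNorm u y) * pd u j y) j x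
      = a (gradNorm u x) * hess u j j x + pd u j x * (deriv a (gradNorm u x)
        * ((∑ k, pd u k x * hess u j k x) / gradNorm u x)) := by
    intro j
    have h := pd_mul dag (dpd j) j
    beta_reduce at h
    rw [h, haG j]
    rfl
  have hthird : ∀ i j : Fin n, pd (hess u i i) j x = pd (hess u i j) i x := by
    intro i j
    have h1 : pd (pd (pd u i) i) j x = pd (pd (pd u i) j) i x :=
      pd_symm (hpd2 i x hx) j i
    have h2 : pd (hess u j i) i x = pd (hess u i j) i x := by
      apply pd_congr
      filter_upwards [hΩ.mem_nhds hx] with y hy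
      exact pd_symm ((hUy y hy).of_le (by norm_num)) j i
    exact h1.trans h2
  have hlapexpr : ∀ j : Fin n, pd (lap u) j x = ∑ i, pd (hess u i j) i x := by
    intro j
    have h := pd_sum Finset.univ (fun i => hess u i i) (fun i _ => dhess i i) j
    beta_reduce at h
    have h' : pd (lap u) j x = ∑ i, pd (hess u i i) j x := h
    rw [h']
    exact Finset.sum_congr rfl fun i _ => hthird i j
  have hterm1 : ∀ j : Fin n,
      pd (fun y => (a (gradNorm u y)) ^ 2 * pd u j y * lap u y) j x
      = ((a (gradNorm u x))^2 * pd u j x) * (∑ i, pd (hess u i j) i x)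
        + (∑ i, hess u i i x) * ((a (gradNorm u x))^2 * hess u j j x
          + pd u j x * (2 * a (gradNorm u x) * deriv a (gradNorm u x)
            * ((∑ k, pd u k x * hess u j k x) / gradNorm u x))) := by
    intro j
    have h := pd_mul (f := fun y => (a (gradNorm u y))^2 * pd u j y)
      (dag2.mul (dpd j)) dlap j
    beta_reduce at h
    have hinner := pd_mul dag2 (dpd j) j
    beta_reduce at hinner
    rw [hag2 j] at hinner
    have hpp : pd (pd u j) j x = hess u j j x := rfl
    rw [hpp] at hinner
    rw [hinner, hlapexpr j] at h
    have hlx : lap u x = ∑ i, hess u i i x := rfl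
    rw [hlx] at h
    exact h
  have hterm2 : ∀ i : Fin n,
      pd (fun y => (a (gradNorm u y)) ^ 2 * ∑ j, pd u j y * hess u i j y) i x
      = (a (gradNorm u x))^2 * (∑ j, (pd u j x * pd (hess u i j) i x
          + hess u i j x * hess u i j x))
        + (∑ j, pd u j x * hess u i j x) * (2 * a (gradNorm u x) * deriv a (gradNorm u x)
          * ((∑ k, pd u k x * hess u i k x) / gradNorm u x)) := by
    intro i
    have dinner : DifferentiableAt ℝ (fun y => ∑ j, pd u j y * hess u i j y) x :=
      DifferentiableAt.fun_sum fun j _ => (dpd j).mul (dhess i j)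
    have h := pd_mul dag2 dinner i
    beta_reduce at h
    have hin := pd_sum Finset.univ (fun j => fun y => pd u j y * hess u i j y)
      (fun j _ => (dpd j).mul (dhess i j)) i
    beta_reduce at hin
    have hin2 : ∀ j : Fin n, pd (fun y => pd u j y * hess u i j y) i x
        = pd u j x * pd (hess u i j) i x + hess u i j x * hess u i j x := by
      intro j
      have h2 := pd_mul (dpd j) (dhess i j) i
      beta_reduce at h2
      have hpp : pd (pd u j) i x = hess u i j x := rfl
      rw [h2, hpp]
    rw [Finset.sum_congr rfl fun j _ => hin2 j] at hin
    rw [hin, hag2 i] at h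
    exact h
  -- assemble the three sums
  have E0 : (∑ j, pd (fun y => a (gradNorm u y) * pd u j y) j x)
      = a (gradNorm u x) * (∑ i, hess u i i x)
        + deriv a (gradNorm u x) / gradNorm u x
          * (∑ j, pd u j x * (∑ k, pd u k x * hess u j k x)) := by
    rw [Finset.sum_congr rfl fun j _ => hdiv j, Finset.sum_add_distrib]
    congr 1
    · rw [Finset.mul_sum]
    · rw [Finset.mul_sum]
      exact Finset.sum_congr rfl fun j _ => by ring
  have E1 : (∑ j, pd (fun y => (a (gradNorm u y)) ^ 2 * pd u j y * lap u y) j x)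
      = (a (gradNorm u x))^2 * (∑ j, pd u j x * (∑ i, pd (hess u i j) i x))
        + (a (gradNorm u x))^2 * (∑ i, hess u i i x)^2
        + 2 * a (gradNorm u x) * deriv a (gradNorm u x) / gradNorm u x
          * ((∑ j, pd u j x * (∑ k, pd u k x * hess u j k x)) * (∑ i, hess u i i x)) := by
    rw [Finset.sum_congr rfl fun j _ => hterm1 j]
    have e1 : ∑ j, (((a (gradNorm u x))^2 * pd u j x) * (∑ i, pd (hess u i j) i x)
        + (∑ i, hess u i i x) * ((a (gradNorm u x))^2 * hess u j j x
          + pd u j x * (2 * a (gradNorm u x) * deriv a (gradNorm u x)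
            * ((∑ k, pd u k x * hess u j k x) / gradNorm u x))))
        = ∑ j, ((a (gradNorm u x))^2 * (pd u j x * (∑ i, pd (hess u i j) i x))
          + ((a (gradNorm u x))^2 * ((∑ i, hess u i i x) * hess u j j x)
            + (2 * a (gradNorm u x) * deriv a (gradNorm u x) / gradNorm u x)
              * (pd u j x * (∑ k, pd u k x * hess u j k x) * (∑ i, hess u i i x)))) :=
      Finset.sum_congr rfl fun j _ => by ring
    rw [e1]
    simp only [Finset.sum_add_distrib]
    simp only [← Finset.mul_sum, ← Finset.sum_mul]
    ring
  have E2 : (∑ i, pd (fun y => (a (gradNorm u y)) ^ 2 * ∑ j, pd u j y * hess u i j y) i x)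
      = (a (gradNorm u x))^2 * (∑ j, pd u j x * (∑ i, pd (hess u i j) i x))
        + (a (gradNorm u x))^2 * (∑ i, ∑ j, (hess u i j x)^2)
        + 2 * a (gradNorm u x) * deriv a (gradNorm u x) / gradNorm u x
          * (∑ i, (∑ k, pd u k x * hess u i k x)^2) := by
    rw [Finset.sum_congr rfl fun i _ => hterm2 i]
    have e2 : ∑ i, ((a (gradNorm u x))^2 * (∑ j, (pd u j x * pd (hess u i j) i x
          + hess u i j x * hess u i j x))
        + (∑ j, pd u j x * hess u i j x) * (2 * a (gradNorm u x) * deriv a (gradNorm u x)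
          * ((∑ k, pd u k x * hess u i k x) / gradNorm u x)))
        = ∑ i, ((a (gradNorm u x))^2 * (∑ j, pd u j x * pd (hess u i j) i x)
          + ((a (gradNorm u x))^2 * (∑ j, (hess u i j x)^2)
            + (2 * a (gradNorm u x) * deriv a (gradNorm u x) / gradNorm u x)
              * ((∑ k, pd u k x * hess u i k x)^2))) := by
      refine Finset.sum_congr rfl fun i _ => ?_
      rw [Finset.sum_add_distrib]
      have e3 : ∑ j, hess u i j x * hess u i j x = ∑ j, (hess u i j x)^2 :=
        Finset.sum_congr rfl fun j _ => (sq (hess u i j x)).symm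
      have e4 : ∑ j, pd u j x * hess u i j x = ∑ k, pd u k x * hess u i k x := rfl
      rw [e3, e4]; ring
    rw [e2]
    simp only [Finset.sum_add_distrib]
    simp only [← Finset.mul_sum, ← Finset.sum_mul]
    have swap : ∑ i, ∑ j, pd u j x * pd (hess u i j) i x
        = ∑ j, pd u j x * (∑ i, pd (hess u i j) i x) := by
      rw [Finset.sum_comm]
      exact Finset.sum_congr rfl fun j _ => (Finset.mul_sum _ _ _).symm
    rw [swap]
    ring
  -- final inequality
  have hA : 0 < a (gradNorm u x) := ha2 _ hs
  have hκ : i_a * a (gradNorm u x) ≤ gradNorm u x * deriv a (gradNorm u x) :=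
    ha3 _ hs
  have hsym : ∀ i j : Fin n, hess u i j x = hess u j i x :=
    fun i j => pd_symm ((hUy x hx).of_le (by norm_num)) i j
  have hcs0 : (∑ j, pd u j x * (∑ k, pd u k x * hess u j k x))^2
      ≤ (∑ j, (pd u j x)^2) * (∑ j, (∑ k, pd u k x * hess u j k x)^2) :=
    Finset.sum_mul_sq_le_sq_mul_sq Finset.univ (fun j => pd u j x)
      (fun j => ∑ k, pd u k x * hess u j k x)
  have hcs : (∑ j, pd u j x * (∑ k, pd u k x * hess u j k x))^2
      ≤ (gradNorm u x)^2 * (∑ j, (∑ k, pd u k x * hess u j k x)^2) := by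
    rw [hss]; exact hcs0
  have hmat0 : 2 * (∑ i, (pd u i x)^2) * (∑ i, (∑ k, pd u k x * hess u i k x)^2)
      - (∑ i, pd u i x * (∑ k, pd u k x * hess u i k x))^2
      ≤ (∑ i, (pd u i x)^2)^2 * (∑ i, ∑ j, (hess u i j x)^2) :=
    matrix_ineq (fun j => pd u j x) (fun i => ∑ k, pd u k x * hess u i k x)
      (fun i j => hess u i j x) hsym (fun i => rfl) hS0
  have hmat : 2 * ((gradNorm u x)^2) * (∑ i, (∑ k, pd u k x * hess u i k x)^2)
      - (∑ j, pd u j x * (∑ k, pd u k x * hess u j k x))^2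
      ≤ ((gradNorm u x)^2)^2 * (∑ i, ∑ j, (hess u i j x)^2) := by
    rw [hss]; exact hmat0
  have hh0 : 0 ≤ ∑ i, ∑ j, (hess u i j x)^2 :=
    Finset.sum_nonneg fun i _ => Finset.sum_nonneg fun j _ => sq_nonneg _
  have key := key_scalar i_a (a (gradNorm u x)) (deriv a (gradNorm u x)) (gradNorm u x)
    (∑ j, pd u j x * (∑ k, pd u k x * hess u j k x))
    (∑ i, (∑ k, pd u k x * hess u i k x)^2)
    (∑ i, ∑ j, (hess u i j x)^2)
    (min 1 ((1+i_a)^2)) hia hA hs hκ hcs hmat hh0 rfl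
  rw [ge_iff_le, E0, E1, E2]
  have expand : (a (gradNorm u x) * (∑ i, hess u i i x)
      + deriv a (gradNorm u x) / gradNorm u x
        * (∑ j, pd u j x * (∑ k, pd u k x * hess u j k x)))^2
      = (a (gradNorm u x))^2 * (∑ i, hess u i i x)^2
        + 2 * a (gradNorm u x) * deriv a (gradNorm u x) / gradNorm u x
          * ((∑ j, pd u j x * (∑ k, pd u k x * hess u j k x)) * (∑ i, hess u i i x))
        + (deriv a (gradNorm u x))^2
          * (∑ j, pd u j x * (∑ k, pd u k x * hess u j k x))^2 / (gradNorm u x)^2 := by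
    field_simp
    ring
  rw [expand]
  ring_nf at key ⊢
  linarith [key]
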